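/- arXiv:1710.01224 — 6 statements merged into one kernel-verified Lean document; each statement's English description precedes it below -/
import Mathlib

section
/- If b, b' are distinct elements of a finite set B of integers with b ≡ b' (mod R), and (α_l)_{l∈L} are complex numbers with α_0 = 1 (0 ∈ L) satisfying (1/N) Σ_{l∈L} |α_l|² e^{2πi l(b−b')/R} = δ_{b,b'} for all b, b' ∈ B (where N = |B|), then Σ_{l∈L} |α_l|² = 0, a contradiction; hence all elements of B are pairwise incongruent modulo R. -/
open Complex

/-- If the orthonormality condition of Assumptions 1.1 holds, then the
elements of `B` are pairwise incongruent modulo `R`. -/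
theorem stmt0 (R : ℤ) (hR : 2 ≤ R) (B L : Finset ℤ) (h0L : (0 : ℤ) ∈ L)
    (α : ℤ → ℂ) (hα0 : α 0 = 1)
    (horth : ∀ b ∈ B, ∀ b' ∈ B,
      (1 / (B.card : ℂ)) * ∑ l ∈ L, (‖α l‖ : ℂ) ^ 2 *
        Complex.exp (2 * Real.pi * Complex.I * ((l : ℂ) * ((b : ℂ) - (b' : ℂ)) / (R : ℂ)))
        = if b = b' then 1 else 0) :
    ∀ b ∈ B, ∀ b' ∈ B, b ≠ b' → ¬ (R ∣ (b - b')) := by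
  intro b hb b' hb' hne hdvd
  obtain ⟨k, hk⟩ := hdvd
  have hR0 : (R : ℂ) ≠ 0 := by
    exact_mod_cast (by omega : R ≠ 0)
  have hexp : ∀ l ∈ L,
      Complex.exp (2 * Real.pi * Complex.I * ((l : ℂ) * ((b : ℂ) - (b' : ℂ)) / (R : ℂ))) = 1 := by
    intro l _
    have hbb : (b : ℂ) - (b' : ℂ) = (R : ℂ) * (k : ℂ) := by
      exact_mod_cast congrArg (fun n : ℤ => (n : ℂ)) hk
    have harg : 2 * Real.pi * Complex.I * ((l : ℂ) * ((b : ℂ) - (b' : ℂ)) / (R : ℂ))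
        = ((l * k : ℤ) : ℂ) * (2 * Real.pi * Complex.I) := by
      rw [hbb]
      push_cast
      field_simp
    rw [harg]
    exact Complex.exp_int_mul_two_pi_mul_I (l * k)
  have h1 := horth b hb b hb
  have h2 := horth b hb b' hb'
  rw [if_pos rfl] at h1
  rw [if_neg hne] at h2
  have hsum2 : (∑ l ∈ L, (‖α l‖ : ℂ) ^ 2 *
        Complex.exp (2 * Real.pi * Complex.I * ((l : ℂ) * ((b : ℂ) - (b' : ℂ)) / (R : ℂ))))
      = ∑ l ∈ L, (‖α l‖ : ℂ) ^ 2 := by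
    refine Finset.sum_congr rfl fun l hl => ?_
    rw [hexp l hl, mul_one]
  have hsum1 : (∑ l ∈ L, (‖α l‖ : ℂ) ^ 2 *
        Complex.exp (2 * Real.pi * Complex.I * ((l : ℂ) * ((b : ℂ) - (b : ℂ)) / (R : ℂ))))
      = ∑ l ∈ L, (‖α l‖ : ℂ) ^ 2 := by
    refine Finset.sum_congr rfl fun l hl => ?_
    rw [sub_self, mul_zero, zero_div, mul_zero, Complex.exp_zero, mul_one]
  rw [hsum1] at h1
  rw [hsum2] at h2
  rw [h2] at h1
  simp at h1
end

section
/- Let R = 4, B = {0,2}, L = {0,a,b} with a ≡ 1 (mod 4) and b ≡ 3 (mod 4). Then every nontrivial finite minimal invariant set leads to a contradiction; i.e., the only finite minimal invariant set (whose points must be integers) is {0}. Concretely: if x₀ is an integer in a min-set and x₀ ≡ 1 (mod 4), then (x₀−b)/4 is a half-odd-integer with |m_B((x₀−b)/4)| = 1, so (x₀−b)/4 would lie in the min-set but is not an integer. -/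
open Complex

/-- `m_B(x) = (1 + e^{2πi·2x})/2` for `R = 4`, `B = {0,2}`. -/
noncomputable def mB (x : ℝ) : ℂ :=
  (1 + Complex.exp (2 * Real.pi * Complex.I * (2 * x))) / 2

/-- The transition maps `g_l(t) = (t - l)/4`. -/
noncomputable def g (l : ℤ) (t : ℝ) : ℝ := (t - (l : ℝ)) / 4

/-- A set `M` is invariant for the digit set `L`: possible transitions stay in `M`. -/
def IsInvSet (L : Finset ℤ) (M : Set ℝ) : Prop :=
  ∀ t ∈ M, ∀ l ∈ L, mB (g l t) ≠ 0 → g l t ∈ M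

/-- A min-set: a nonempty finite invariant set which is minimal among such sets. -/
def IsMinSet (L : Finset ℤ) (M : Set ℝ) : Prop :=
  M.Finite ∧ M.Nonempty ∧ IsInvSet L M ∧
    ∀ M' ⊆ M, M'.Nonempty → IsInvSet L M' → M' = M

lemma mB_zero {x : ℝ} (h : mB x = 0) : ∃ k : ℤ, (4:ℝ) * x = 2*k+1 := by
  have he : Complex.exp (2 * Real.pi * Complex.I * (2 * x)) = -1 := by
    have := h
    unfold mB at this
    field_simp at this
    rw [show (2 * (Real.pi:ℂ) * Complex.I * (2 * (x:ℂ))) = 2 ^ 2 * Real.pi * Complex.I * x by ring]; linear_combination this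
  have h2 : Complex.exp (2 * (2 * Real.pi * Complex.I * (2 * x))) = 1 := by
    rw [two_mul, Complex.exp_add, he]; ring
  obtain ⟨n, hn⟩ := Complex.exp_eq_one_iff.mp h2
  have hx : (4:ℝ) * x = n := by
    have h8 : ((8 * Real.pi * x : ℝ) : ℂ) * Complex.I = ((2 * n * Real.pi : ℝ) : ℂ) * Complex.I := by
      push_cast
      linear_combination hn
    have := mul_right_cancel₀ Complex.I_ne_zero h8
    have hr : (8 * Real.pi * x : ℝ) = 2 * n * Real.pi := by exact_mod_cast this
    have h2' : 2 * Real.pi * (4 * x) = 2 * Real.pi * n := by linarith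
    exact mul_left_cancel₀ (by positivity : (2:ℝ) * Real.pi ≠ 0) h2'
  rcases Int.even_or_odd n with ⟨k, hk⟩ | ⟨k, hk⟩
  · exfalso
    have hx2 : (x:ℝ) = k / 2 := by rw [hk] at hx; push_cast at hx; linarith
    have h1 : Complex.exp (2 * Real.pi * Complex.I * (2 * x)) = 1 := by
      have heq : (2 * Real.pi * Complex.I * (2 * (x:ℝ)) : ℂ) = (k:ℤ) * (2 * Real.pi * Complex.I) := by
        rw [hx2]; push_cast; ring
      rw [heq, Complex.exp_int_mul_two_pi_mul_I]
    rw [he] at h1; norm_num at h1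
  · exact ⟨k, by rw [hk] at hx; push_cast at hx; linarith⟩

lemma mB_half_odd (k : ℤ) : mB ((2*(k:ℝ)+1)/2) = 1 := by
  unfold mB
  rw [show (2 * ↑Real.pi * Complex.I * (2 * ((2*(k:ℝ)+1)/2 : ℝ)) : ℂ) = ((2*k+1:ℤ)) * (2 * Real.pi * Complex.I) by push_cast; ring, Complex.exp_int_mul_two_pi_mul_I]
  norm_num

def mstep (L : Finset ℤ) (x y : ℝ) : Prop := ∃ l ∈ L, mB (g l x) ≠ 0 ∧ y = g l x

lemma reach_subset {L : Finset ℤ} {M : Set ℝ} (hinv : IsInvSet L M) {t s : ℝ}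
    (ht : t ∈ M) (h : Relation.TransGen (mstep L) t s) : s ∈ M := by
  induction h with
  | single h => obtain ⟨l, hl, hne, rfl⟩ := h; exact hinv t ht l hl hne
  | tail _ h ih => obtain ⟨l, hl, hne, rfl⟩ := h; exact hinv _ ih l hl hne

lemma reach_cycle {L : Finset ℤ} {x y : ℝ} (h : Relation.TransGen (mstep L) x y) :
    ∃ n : ℕ, ∃ c : ℤ, (4:ℝ)^(n+1) * y = x - c := by
  induction h with
  | single h =>
    obtain ⟨l, _, _, rfl⟩ := h
    exact ⟨0, l, by unfold g; push_cast; ring⟩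
  | tail _ h ih =>
    obtain ⟨l, _, _, rfl⟩ := h
    obtain ⟨n, c, hc⟩ := ih
    refine ⟨n+1, c + 4^(n+1) * l, ?_⟩
    unfold g; push_cast; linear_combination hc

/-- for `L = {0,a,b}` with `a ≡ 1 (mod 4)`, `b ≡ 3 (mod 4)`, the only min-set
is `{0}`; concretely, if `x₀ ≡ 1 (mod 4)` is an integer then `(x₀ - b)/4` is a
half-odd-integer with `|m_B((x₀ - b)/4)| = 1`. -/
theorem stmt4 (a b : ℤ) (ha : a % 4 = 1) (hb : b % 4 = 3) :
    (∀ M : Set ℝ, IsMinSet ({0, a, b} : Finset ℤ) M → M = {0}) ∧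
    (∀ x₀ : ℤ, x₀ % 4 = 1 →
      (∃ k : ℤ, ((x₀ : ℝ) - (b : ℝ)) / 4 = (2 * (k : ℝ) + 1) / 2) ∧
      ‖mB (((x₀ : ℝ) - (b : ℝ)) / 4)‖ = 1) := by
  have haodd : a % 2 = 1 := by omega
  have hbodd : b % 2 = 1 := by omega
  constructor
  · intro M hM
    obtain ⟨hfin, hne, hinv, hmin⟩ := hM
    set L : Finset ℤ := {0, a, b} with hL
    have h0L : (0:ℤ) ∈ L := by simp [hL]
    have haL : a ∈ L := by simp [hL]
    have hbL : b ∈ L := by simp [hL]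
    -- no transition from t can be forbidden for both l=0 and l=a
    have hsome : ∀ t : ℝ, mB (g 0 t) ≠ 0 ∨ mB (g a t) ≠ 0 := by
      intro t
      by_contra h
      push_neg at h
      obtain ⟨h0, ha'⟩ := h
      obtain ⟨k, hk⟩ := mB_zero h0
      obtain ⟨k', hk'⟩ := mB_zero ha'
      unfold g at hk hk'
      have : (a:ℝ) = 2*(k - k') := by push_cast; push_cast at hk hk'; linarith
      have : a = 2*(k-k') := by exact_mod_cast this
      omega
    -- every point of M lies on a cycle, hence has odd denominator
    have hcyc : ∀ t ∈ M, ∃ d : ℤ, Odd d ∧ ∃ z : ℤ, (d:ℝ) * t = z := by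
      intro t ht
      have htt : Relation.TransGen (mstep L) t t := by
        set S : Set ℝ := {s | Relation.TransGen (mstep L) t s} with hS
        have hSM : S ⊆ M := fun s hs => reach_subset hinv ht hs
        have hSne : S.Nonempty := by
          rcases hsome t with h | h
          · exact ⟨g 0 t, Relation.TransGen.single ⟨0, h0L, h, rfl⟩⟩
          · exact ⟨g a t, Relation.TransGen.single ⟨a, haL, h, rfl⟩⟩
        have hSinv : IsInvSet L S := by
          intro s hs l hl hnz
          exact Relation.TransGen.tail hs ⟨l, hl, hnz, rfl⟩
        have := hmin S hSM hSne hSinv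
        rw [← this] at ht
        exact ht
      obtain ⟨n, c, hc⟩ := reach_cycle htt
      refine ⟨4^(n+1) - 1, ⟨2*4^n - 1, by ring⟩, -c, ?_⟩
      push_cast
      push_cast at hc
      linear_combination hc
    -- every point of M is an integer
    have hint : ∀ t ∈ M, ∃ z : ℤ, t = (z:ℝ) := by
      intro t ht
      by_contra h
      push_neg at h
      have h0 : mB (g 0 t) ≠ 0 := by
        intro hz
        obtain ⟨k, hk⟩ := mB_zero hz
        unfold g at hk
        exact h (2*k+1) (by push_cast; push_cast at hk; linarith)
      have ha' : mB (g a t) ≠ 0 := by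
        intro hz
        obtain ⟨k, hk⟩ := mB_zero hz
        unfold g at hk
        exact h (a + 2*k+1) (by push_cast; push_cast at hk; linarith)
      obtain ⟨d₀, hd₀, z₀, hz₀⟩ := hcyc _ (hinv t ht 0 h0L h0)
      obtain ⟨d₁, hd₁, z₁, hz₁⟩ := hcyc _ (hinv t ht a haL ha')
      unfold g at hz₀ hz₁
      have hreal : (d₀:ℝ) * d₁ * a = 4 * (d₁ * z₀ - d₀ * z₁) := by
        push_cast; push_cast at hz₀ hz₁; linear_combination (4*(d₁:ℝ))*hz₀ - (4*(d₀:ℝ))*hz₁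
      have hintid : d₀ * d₁ * a = 4 * (d₁ * z₀ - d₀ * z₁) := by exact_mod_cast hreal
      have : Odd (d₀ * d₁ * a) := (hd₀.mul hd₁).mul (Int.odd_iff.mpr haodd)
      rw [hintid] at this
      rcases this with ⟨m, hm⟩
      omega
    -- every integer point of M is divisible by 4^n for all n
    have hdvd : ∀ n : ℕ, ∀ t : ℤ, (t:ℝ) ∈ M → (4^n : ℤ) ∣ t := by
      intro n
      induction n with
      | zero => intro t _; simp
      | succ n ih =>
        intro t ht
        -- t is even
        have hteven : t % 2 = 0 := by
          by_contra hodd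
          have htodd : t % 2 = 1 := by omega
          have ha' : mB (g a (t:ℝ)) ≠ 0 := by
            intro hz
            obtain ⟨k, hk⟩ := mB_zero hz
            unfold g at hk
            have : (t:ℝ) - a = 2*k+1 := by push_cast at hk ⊢; linarith
            have : t - a = 2*k+1 := by exact_mod_cast this
            omega
          have hb' : mB (g b (t:ℝ)) ≠ 0 := by
            intro hz
            obtain ⟨k, hk⟩ := mB_zero hz
            unfold g at hk
            have : (t:ℝ) - b = 2*k+1 := by push_cast at hk ⊢; linarith
            have : t - b = 2*k+1 := by exact_mod_cast this
            omega
          obtain ⟨za, hza⟩ := hint _ (hinv _ ht a haL ha')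
          obtain ⟨zb, hzb⟩ := hint _ (hinv _ ht b hbL hb')
          unfold g at hza hzb
          have h4a : (t:ℝ) - a = 4 * za := by linarith
          have h4b : (t:ℝ) - b = 4 * zb := by linarith
          have h4a' : t - a = 4 * za := by exact_mod_cast h4a
          have h4b' : t - b = 4 * zb := by exact_mod_cast h4b
          omega
        -- transition by 0 is allowed
        have h0' : mB (g 0 (t:ℝ)) ≠ 0 := by
          intro hz
          obtain ⟨k, hk⟩ := mB_zero hz
          unfold g at hk
          have : (t:ℝ) = 2*k+1 := by push_cast at hk ⊢; linarith
          have : t = 2*k+1 := by exact_mod_cast this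
          omega
        have hmem := hinv _ ht 0 h0L h0'
        obtain ⟨z, hz⟩ := hint _ hmem
        unfold g at hz hmem
        have hz4 : (t:ℝ) = 4 * z := by push_cast at hz ⊢; linarith
        have hz4' : t = 4 * z := by exact_mod_cast hz4
        have hzM : (z:ℝ) ∈ M := by
          have : ((t:ℝ) - (0:ℤ)) / 4 = (z:ℝ) := by rw [hz4]; push_cast; ring
          rwa [this] at hmem
        obtain ⟨m, hm⟩ := ih z hzM
        exact ⟨m, by rw [hz4', hm]; ring⟩
    -- conclude every point of M is 0
    have hall0 : ∀ x ∈ M, x = 0 := by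
      intro x hx
      obtain ⟨t, rfl⟩ := hint x hx
      have ht0 : t = 0 := by
        by_contra h
        have hpos : 0 < |t| := by positivity
        have h1 := hdvd t.natAbs t hx
        have h2 : (4:ℤ)^t.natAbs ≤ |t| := Int.le_of_dvd hpos ((dvd_abs _ _).mpr h1)
        have h3 : (t.natAbs : ℤ) < (4:ℤ)^t.natAbs := by
          have := Nat.lt_pow_self (n := t.natAbs) (by norm_num : 1 < 4)
          exact_mod_cast this
        rw [Int.abs_eq_natAbs] at h2
        omega
      rw [ht0]; norm_num
    obtain ⟨x, hx⟩ := hne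
    have : x = 0 := hall0 x hx
    rw [this] at hx
    exact Set.eq_singleton_iff_unique_mem.mpr ⟨hx, hall0⟩
  · intro x₀ hx₀
    obtain ⟨k, hk⟩ : ∃ k : ℤ, x₀ - b = 4*k + 2 := ⟨(x₀ - b - 2)/4, by omega⟩
    have hxr : ((x₀:ℝ) - b) / 4 = (2*(k:ℝ)+1)/2 := by
      have : (x₀:ℝ) - b = 4*k+2 := by exact_mod_cast hk
      rw [this]; ring
    refine ⟨⟨k, hxr⟩, ?_⟩
    rw [hxr, mB_half_odd]
    simp
end

section
/- Let R = 4, B = {0,2}, L = {0,a,b} with a ≡ b ≡ a₀ (mod 4), a₀ ∈ {1,3}. If x₀ is an integer with |m_B(x₀)| = 1 (i.e., x₀ ∈ ℤ) belonging to a nontrivial min-set, then: (i) x₀ ≡ 0 (mod 4) or x₀ ≡ a₀ (mod 4); (ii) if x₀ ≡ 0 (mod 4) then m_B(x₀/4) ≠ 0 while m_B((x₀−a)/4) = m_B((x₀−b)/4) = 0; (iii) if x₀ ≡ a₀ (mod 4) then m_B((x₀−a)/4) ≠ 0 and m_B((x₀−b)/4) ≠ 0 while m_B(x₀/4) = 0.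 -/
open Complex

lemma mB_zero_iff (x : ℝ) : mB x = 0 ↔ ∃ m : ℤ, x = (2 * m + 1) / 4 := by
  have hpi : (Real.pi : ℂ) ≠ 0 := by exact_mod_cast Real.pi_ne_zero
  constructor
  · intro h
    have h1 : Complex.exp (2 * Real.pi * Complex.I * (2 * x)) = -1 := by
      have h2 : (1 + Complex.exp (2 * Real.pi * Complex.I * (2 * x))) = 0 := by
        unfold mB at h
        field_simp at h
        rw [show (2:ℂ) ^ 2 * (Real.pi : ℂ) * Complex.I * (x : ℂ) = 2 * Real.pi * Complex.I * (2 * x) by ring, mul_zero] at h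
        exact h
      linear_combination h2
    have h3 : Complex.exp (2 * Real.pi * Complex.I * (2 * x) - Real.pi * Complex.I) = 1 := by
      rw [Complex.exp_sub, h1, Complex.exp_pi_mul_I]
      norm_num
    rw [Complex.exp_eq_one_iff] at h3
    obtain ⟨n, hn⟩ := h3
    refine ⟨n, ?_⟩
    have h4 : (Real.pi * Complex.I) * (4 * x) = (Real.pi * Complex.I) * (2 * n + 1) := by
      linear_combination hn
    have h5 : (4 * x : ℂ) = 2 * n + 1 :=
      mul_left_cancel₀ (mul_ne_zero hpi Complex.I_ne_zero) h4
    have h6 : (4 * x : ℝ) = 2 * n + 1 := by exact_mod_cast h5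
    linarith
  · rintro ⟨m, rfl⟩
    unfold mB
    have : 2 * (Real.pi : ℂ) * Complex.I * (2 * (((2 * m + 1) / 4 : ℝ) : ℂ)) =
        m * (2 * Real.pi * Complex.I) + Real.pi * Complex.I := by
      push_cast
      ring
    rw [this, Complex.exp_add, Complex.exp_int_mul_two_pi_mul_I, Complex.exp_pi_mul_I]
    norm_num

lemma mB_int (n : ℤ) : mB ((n : ℝ) / 4) = 0 ↔ Odd n := by
  rw [mB_zero_iff]
  constructor
  · rintro ⟨m, hm⟩
    have : (n : ℝ) = 2 * m + 1 := by linarith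
    have : n = 2 * m + 1 := by exact_mod_cast this
    exact ⟨m, by omega⟩
  · rintro ⟨m, hm⟩
    exact ⟨m, by rw [hm]; push_cast; ring⟩

lemma mB_orbit_ne (k : ℤ) (n : ℕ) : mB (((2 * k + 1 : ℤ) : ℝ) / 2 / 4 ^ n) ≠ 0 := by
  rw [Ne, mB_zero_iff]
  rintro ⟨m, hm⟩
  have h4 : ((2 * k + 1 : ℤ) : ℝ) * 4 = (2 * m + 1) * (2 * 4 ^ n) := by
    have hpow : (4 : ℝ) ^ n ≠ 0 := by positivity
    field_simp at hm
    push_cast at hm ⊢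
    linarith
  have h5 : (2 * k + 1) * 4 = (2 * m + 1) * (2 * 4 ^ n) := by exact_mod_cast h4
  cases n with
  | zero => simp at h5; omega
  | succ j =>
    rw [pow_succ] at h5
    have h6 : (2 * k + 1) * 4 = ((2 * m + 1) * 4 ^ j) * 8 := by linear_combination h5
    set p := (2 * m + 1) * 4 ^ j with hp
    omega

lemma half_in_M_false (L : Finset ℤ) (M : Set ℝ) (h0 : (0 : ℤ) ∈ L)
    (hinv : IsInvSet L M) (hfin : M.Finite) (k : ℤ)
    (hk : ((2 * k + 1 : ℤ) : ℝ) / 2 ∈ M) : False := by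
  set c : ℝ := ((2 * k + 1 : ℤ) : ℝ) / 2 with hc
  have hc0 : c ≠ 0 := by
    rw [hc]
    intro h
    have : ((2 * k + 1 : ℤ) : ℝ) = 0 := by linarith [div_eq_zero_iff.mp h]
    have : (2 * k + 1 : ℤ) = 0 := by exact_mod_cast this
    omega
  have hmem : ∀ n : ℕ, c / 4 ^ n ∈ M := by
    intro n
    induction n with
    | zero => simpa using hk
    | succ j ih =>
      have hne : mB (g 0 (c / 4 ^ j)) ≠ 0 := by
        simp only [g, Int.cast_zero, sub_zero, div_div, ← pow_succ]
        exact mB_orbit_ne k (j + 1)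
      have := hinv _ ih 0 h0 hne
      simpa [g, div_div, ← pow_succ] using this
  have hinj : Function.Injective (fun n : ℕ => c / 4 ^ n) := by
    intro i j hij
    simp only at hij
    rw [div_eq_div_iff (by positivity) (by positivity)] at hij
    have hij2 : (4 : ℝ) ^ j = 4 ^ i := mul_left_cancel₀ hc0 hij
    have hij3 : (4 : ℕ) ^ j = (4 : ℕ) ^ i := by exact_mod_cast hij2
    exact (Nat.pow_right_injective (by norm_num) hij3).symm
  exact absurd (Set.infinite_of_injective_forall_mem hinj hmem) hfin.not_infinite

/-- residues and possible/impossible transitions for integer points of a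
nontrivial min-set when `a ≡ b ≡ a₀ (mod 4)`, `a₀ ∈ {1,3}`. -/
theorem stmt5 (a b a₀ : ℤ) (ha₀ : a₀ = 1 ∨ a₀ = 3) (ha : a % 4 = a₀) (hb : b % 4 = a₀)
    (M : Set ℝ) (hM : IsMinSet ({0, a, b} : Finset ℤ) M) (hMnt : M ≠ {0})
    (x₀ : ℤ) (hx : (x₀ : ℝ) ∈ M) :
    (x₀ % 4 = 0 ∨ x₀ % 4 = a₀) ∧
    (x₀ % 4 = 0 → mB ((x₀ : ℝ) / 4) ≠ 0 ∧
      mB (((x₀ : ℝ) - (a : ℝ)) / 4) = 0 ∧ mB (((x₀ : ℝ) - (b : ℝ)) / 4) = 0) ∧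
    (x₀ % 4 = a₀ → mB (((x₀ : ℝ) - (a : ℝ)) / 4) ≠ 0 ∧
      mB (((x₀ : ℝ) - (b : ℝ)) / 4) ≠ 0 ∧ mB ((x₀ : ℝ) / 4) = 0) := by
  obtain ⟨hfin, -, hinv, -⟩ := hM
  have h0L : (0 : ℤ) ∈ ({0, a, b} : Finset ℤ) := by simp
  have haL : a ∈ ({0, a, b} : Finset ℤ) := by simp
  have hne : ∀ n : ℤ, Even n → mB ((n : ℝ) / 4) ≠ 0 := by
    intro n hn h
    have h2 := (mB_int n).mp h
    rw [Int.even_iff] at hn; rw [Int.odd_iff] at h2; omega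
  have hzero : ∀ n : ℤ, Odd n → mB ((n : ℝ) / 4) = 0 := fun n hn => (mB_int n).mpr hn
  have casta : ((x₀ : ℝ) - (a : ℝ)) / 4 = ((x₀ - a : ℤ) : ℝ) / 4 := by push_cast; ring
  have castb : ((x₀ : ℝ) - (b : ℝ)) / 4 = ((x₀ - b : ℤ) : ℝ) / 4 := by push_cast; ring
  have part1 : x₀ % 4 = 0 ∨ x₀ % 4 = a₀ := by
    by_contra hcon
    push_neg at hcon
    obtain ⟨hc0, hca⟩ := hcon
    rcases (show x₀ % 4 = 2 ∨ x₀ % 2 = 1 by omega) with h2 | hoddx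
    · have hmem : g 0 (x₀ : ℝ) ∈ M := by
        apply hinv _ hx 0 h0L
        simp only [g, Int.cast_zero, sub_zero]
        exact hne x₀ (by rw [Int.even_iff]; omega)
      obtain ⟨k, hk⟩ : ∃ k, x₀ = 4 * k + 2 := ⟨x₀ / 4, by omega⟩
      apply half_in_M_false _ M h0L hinv hfin k
      have heq : g 0 (x₀ : ℝ) = ((2 * k + 1 : ℤ) : ℝ) / 2 := by
        simp only [g, Int.cast_zero, sub_zero, hk]; push_cast; ring
      rwa [heq] at hmem
    · have h2 : (x₀ - a) % 4 = 2 := by rcases ha₀ with rfl | rfl <;> omega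
      have hga : g a (x₀ : ℝ) = ((x₀ - a : ℤ) : ℝ) / 4 := by
        simp only [g]; push_cast; ring
      have hmem : g a (x₀ : ℝ) ∈ M := by
        apply hinv _ hx a haL
        rw [hga]
        exact hne _ (by rw [Int.even_iff]; omega)
      obtain ⟨k, hk⟩ : ∃ k, x₀ - a = 4 * k + 2 := ⟨(x₀ - a) / 4, by omega⟩
      apply half_in_M_false _ M h0L hinv hfin k
      have heq : g a (x₀ : ℝ) = ((2 * k + 1 : ℤ) : ℝ) / 2 := by
        rw [hga, hk]; push_cast; ring
      rwa [heq] at hmem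
  refine ⟨part1, ?_, ?_⟩
  · intro h0
    refine ⟨hne x₀ (by rw [Int.even_iff]; omega), ?_, ?_⟩
    · rw [casta]
      exact hzero _ (by rw [Int.odd_iff]; rcases ha₀ with rfl | rfl <;> omega)
    · rw [castb]
      exact hzero _ (by rw [Int.odd_iff]; rcases ha₀ with rfl | rfl <;> omega)
  · intro h0
    refine ⟨?_, ?_, hzero x₀ (by rw [Int.odd_iff]; rcases ha₀ with rfl | rfl <;> omega)⟩
    · rw [casta]
      exact hne _ (by rw [Int.even_iff]; rcases ha₀ with rfl | rfl <;> omega)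
    · rw [castb]
      exact hne _ (by rw [Int.even_iff]; rcases ha₀ with rfl | rfl <;> omega)
end

section
/- For R = 4, B = {0,2}, the digit set {0,3} has a unique extreme cycle, namely {−1}: that is, the only finite sets of integers t with |m_B(t)| = 1 that are cyclically permuted by the maps t ↦ t/4 and t ↦ (t−3)/4 (staying in ℤ with |m_B| = 1 along the cycle) are contained in {−1} ∪ {0}, and the nontrivial one is {−1}. -/
open Complex

/-- the only extreme cycles for the digit set `{0,3}` (finite nonempty sets of
integers with `|m_B| = 1`, cyclically permuted by `t ↦ t/4` and `t ↦ (t-3)/4`) are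
contained in `{-1} ∪ {0}`, and the nontrivial one is `{-1}`. -/
theorem stmt8 (C : Set ℝ) (hfin : C.Finite) (hne : C.Nonempty)
    (hint : ∀ t ∈ C, ∃ k : ℤ, t = (k : ℝ))
    (hext : ∀ t ∈ C, ‖mB t‖ = 1)
    (hclosed : ∀ t ∈ C, ∃ l ∈ ({0, 3} : Finset ℤ), (t - (l : ℝ)) / 4 ∈ C)
    (hmin : ∀ C' ⊆ C, C'.Nonempty →
      (∀ t ∈ C', ∃ l ∈ ({0, 3} : Finset ℤ), (t - (l : ℝ)) / 4 ∈ C') → C' = C) :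
    C ⊆ ({-1, 0} : Set ℝ) ∧ (C ≠ {0} → C = {-1}) := by
  -- Step 1: show -1 ∈ C or 0 ∈ C by strong induction on |k|.
  have reach : ∀ n : ℕ, ∀ k : ℤ, (k : ℝ) ∈ C → k.natAbs ≤ n →
      ((-1 : ℝ) ∈ C ∨ (0 : ℝ) ∈ C) := by
    intro n
    induction n with
    | zero =>
      intro k hk hkn
      have : k = 0 := by omega
      subst this
      right; simpa using hk
    | succ n ih =>
      intro k hk hkn
      by_cases h0 : k = 0
      · right; subst h0; simpa using hk
      by_cases h1 : k = -1
      · left; subst h1; simpa using hk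
      obtain ⟨l, hl, hlC⟩ := hclosed _ hk
      obtain ⟨m, hm⟩ := hint _ hlC
      have hl' : l = 0 ∨ l = 3 := by
        simpa using hl
      have hcast : (k : ℝ) - (l : ℝ) = 4 * (m : ℝ) := by
        field_simp at hm
        linarith [hm]
      have hint' : k - l = 4 * m := by exact_mod_cast hcast
      have hmC : (m : ℝ) ∈ C := hm ▸ hlC
      have hne1 : k ≠ 1 := by
        intro h; subst h; omega
      have hlt : m.natAbs ≤ n := by omega
      exact ih m hmC hlt
  obtain ⟨t, ht⟩ := hne
  obtain ⟨k, hk⟩ := hint t ht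
  have key : (-1 : ℝ) ∈ C ∨ (0 : ℝ) ∈ C :=
    reach k.natAbs k (hk ▸ ht) le_rfl
  -- Step 2: use minimality.
  rcases key with hneg | hzero
  · have hC : C = {-1} := by
      have := hmin {-1} (by simpa using hneg) ⟨-1, rfl⟩ ?_
      · exact this.symm
      · intro t ht
        refine ⟨3, by simp, ?_⟩
        simp only [Set.mem_singleton_iff] at ht ⊢
        rw [ht]; norm_num
    subst hC
    constructor
    · intro x hx; simp only [Set.mem_singleton_iff] at hx; simp [hx]
    · intro _; rfl
  · have hC : C = {0} := by
      have := hmin {0} (by simpa using hzero) ⟨0, rfl⟩ ?_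
      · exact this.symm
      · intro t ht
        refine ⟨0, by simp, ?_⟩
        simp only [Set.mem_singleton_iff] at ht ⊢
        rw [ht]; norm_num
    subst hC
    constructor
    · intro x hx; simp only [Set.mem_singleton_iff] at hx; simp [hx]
    · intro h; exact absurd rfl h
end

section
/- Let R = 4, B = {0,2}, and L = {0, 3, 4^{n+1} − 1} for some n ∈ ℕ. Then the set M = {−1, −4, −4², …, −4ⁿ} is a nontrivial finite minimal invariant set: g_{4^{n+1}−1}(−1) = −4ⁿ, g_3(−1) = −1, g_0(−4^k) = −4^{k−1} for 1 ≤ k ≤ n, and |m_B(x)| = 1 for all x ∈ M, and transitions between any two points of M are possible. -/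
open Complex

lemma mB_int_s9 (m : ℤ) : mB (m : ℝ) = 1 := by
  unfold mB
  have h : (2 * (Real.pi:ℂ) * Complex.I * (2 * ((m:ℝ):ℂ))) = (2*m : ℤ) * (2 * Real.pi * Complex.I) := by
    push_cast; ring
  rw [h, Complex.exp_int_mul_two_pi_mul_I]
  norm_num

lemma mB_odd_quarter (j : ℤ) : mB ((2 * (j:ℝ) + 1) / 4) = 0 := by
  unfold mB
  have h : (2 * (Real.pi:ℂ) * Complex.I * (2 * (((2 * (j:ℝ) + 1) / 4 : ℝ) : ℂ)))
      = (j : ℤ) * (2 * Real.pi * Complex.I) + Real.pi * Complex.I := by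
    push_cast; ring
  rw [h, Complex.exp_add, Complex.exp_int_mul_two_pi_mul_I, Complex.exp_pi_mul_I]
  norm_num

lemma mB_neg_pow (k : ℕ) : mB (-(4:ℝ)^k) = 1 := by
  have h : (-(4:ℝ)^k) = ((-(4^k) : ℤ) : ℝ) := by push_cast; ring
  rw [h, mB_int_s9]

lemma g_zero_pow (k : ℕ) : g 0 (-(4:ℝ)^(k+1)) = -(4:ℝ)^k := by
  unfold g; push_cast; ring

/-- descending: from `-4^k ∈ M'` all lower powers are in `M'`. -/
lemma descend {L : Finset ℤ} (h0 : (0:ℤ) ∈ L) {M' : Set ℝ} (hinv : IsInvSet L M') :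
    ∀ k : ℕ, -(4:ℝ)^k ∈ M' → ∀ j ≤ k, -(4:ℝ)^j ∈ M' := by
  intro k
  induction k with
  | zero => intro hk j hj; interval_cases j; exact hk
  | succ k ih =>
    intro hk j hj
    have hdown : -(4:ℝ)^k ∈ M' := by
      have := hinv _ hk 0 h0 (by rw [g_zero_pow]; rw [mB_neg_pow]; norm_num)
      rwa [g_zero_pow] at this
    rcases Nat.lt_or_ge j (k+1) with h | h
    · exact ih hdown j (Nat.lt_succ_iff.mp h)
    · have : j = k + 1 := le_antisymm hj h
      rw [this]; exact hk

/-- for `L = {0, 3, 4^{n+1} - 1}`, the set `M = {-1, -4, …, -4^n}` is a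
nontrivial min-set, with the indicated transitions, and `|m_B| = 1` on `M`. -/
theorem stmt9 (n : ℕ) :
    g (4 ^ (n + 1) - 1) (-1) = -(4 : ℝ) ^ n ∧
    g 3 (-1) = -1 ∧
    (∀ k : ℕ, 1 ≤ k → k ≤ n → g 0 (-(4 : ℝ) ^ k) = -(4 : ℝ) ^ (k - 1)) ∧
    (∀ x ∈ {x : ℝ | ∃ k ≤ n, x = -(4 : ℝ) ^ k}, ‖mB x‖ = 1) ∧
    IsMinSet ({0, 3, 4 ^ (n + 1) - 1} : Finset ℤ) {x : ℝ | ∃ k ≤ n, x = -(4 : ℝ) ^ k} ∧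
    {x : ℝ | ∃ k ≤ n, x = -(4 : ℝ) ^ k} ≠ ({0} : Set ℝ) := by
  set M : Set ℝ := {x : ℝ | ∃ k ≤ n, x = -(4 : ℝ) ^ k} with hM
  have hL0 : (0:ℤ) ∈ ({0, 3, 4 ^ (n + 1) - 1} : Finset ℤ) := by simp
  have hLtop : (4 ^ (n + 1) - 1 : ℤ) ∈ ({0, 3, 4 ^ (n + 1) - 1} : Finset ℤ) := by simp
  have hg1 : g (4 ^ (n + 1) - 1) (-1) = -(4 : ℝ) ^ n := by
    unfold g; push_cast; field_simp; ring
  -- invariance of M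
  have hinvM : IsInvSet ({0, 3, 4 ^ (n + 1) - 1} : Finset ℤ) M := by
    rintro t ⟨k, hk, rfl⟩ l hl hne
    simp only [Finset.mem_insert, Finset.mem_singleton] at hl
    rcases hl with rfl | rfl | rfl
    · -- l = 0
      rcases k with _ | k
      · exfalso
        apply hne
        have : g 0 (-(4:ℝ)^0) = (2 * ((-1:ℤ):ℝ) + 1) / 4 := by unfold g; norm_num
        rw [this, mB_odd_quarter]
      · rw [g_zero_pow]; exact ⟨k, Nat.le_of_succ_le hk, rfl⟩
    · -- l = 3
      rcases k with _ | k
      · have : g 3 (-(4:ℝ)^0) = -(4:ℝ)^0 := by unfold g; norm_num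
        rw [this]; exact ⟨0, Nat.zero_le _, rfl⟩
      · exfalso
        apply hne
        have : g 3 (-(4:ℝ)^(k+1)) = (2 * ((-(2*4^k) - 2 : ℤ):ℝ) + 1) / 4 := by
          unfold g; push_cast; ring
        rw [this, mB_odd_quarter]
    · -- l = 4^{n+1} - 1
      rcases k with _ | k
      · have : g (4 ^ (n + 1) - 1) (-(4:ℝ)^0) = -(4:ℝ)^n := by
          rw [← hg1]; norm_num
        rw [this]; exact ⟨n, le_rfl, rfl⟩
      · exfalso
        apply hne
        have : g (4 ^ (n + 1) - 1) (-(4:ℝ)^(k+1))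
            = (2 * ((-(2*4^k) - 2*4^n : ℤ):ℝ) + 1) / 4 := by
          unfold g; push_cast; ring
        rw [this, mB_odd_quarter]
  refine ⟨hg1, by unfold g; norm_num, ?_, ?_, ?_, ?_⟩
  · intro k hk1 hkn
    obtain ⟨k', rfl⟩ := Nat.exists_eq_add_of_le hk1
    simp only [Nat.add_sub_cancel_left] at *
    have := g_zero_pow k'
    rw [add_comm] at *
    simpa using g_zero_pow k'
  · rintro x ⟨k, hk, rfl⟩
    rw [mB_neg_pow]; simp
  · refine ⟨?_, ⟨-(4:ℝ)^0, 0, Nat.zero_le _, rfl⟩, hinvM, ?_⟩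
    · -- finiteness: M is image of a finite set
      have : M = (fun k : ℕ => -(4:ℝ)^k) '' (Set.Iic n) := by
        ext x; constructor
        · rintro ⟨k, hk, rfl⟩; exact ⟨k, hk, rfl⟩
        · rintro ⟨k, hk, rfl⟩; exact ⟨k, hk, rfl⟩
      rw [this]
      exact (Set.finite_Iic n).image _
    · -- minimality
      intro M' hsub hne hinv
      obtain ⟨x, hx⟩ := hne
      obtain ⟨k, hk, rfl⟩ := hsub hx
      -- get -1 ∈ M'
      have h1 : -(4:ℝ)^0 ∈ M' := descend hL0 hinv k hx 0 (Nat.zero_le _)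
      -- get -4^n ∈ M'
      have hn : -(4:ℝ)^n ∈ M' := by
        have := hinv _ h1 _ hLtop ?_
        · rwa [show g (4 ^ (n + 1) - 1) (-(4:ℝ)^0) = -(4:ℝ)^n by rw [← hg1]; norm_num] at this
        · rw [show g (4 ^ (n + 1) - 1) (-(4:ℝ)^0) = -(4:ℝ)^n by rw [← hg1]; norm_num,
            mB_neg_pow]; norm_num
      apply Set.Subset.antisymm hsub
      rintro x ⟨j, hj, rfl⟩
      exact descend hL0 hinv n hn j hj
  · intro h
    have : (-(4:ℝ)^0) ∈ M := ⟨0, Nat.zero_le _, rfl⟩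
    rw [h] at this
    norm_num at this
end

section
/- Let R = 4, B = {0,2}, L = {0,3,207}. There is no nontrivial min-set. Specifically, any min-set must contain −1 (the unique extreme cycle point for digits {0,3}), the transitions −1 → −52 → −13 → −55 (with digits 207, 0, 207 respectively, under g_l(t) = (t−l)/4) are possible, but −55 ≢ 3 (mod 4) and −55 ≢ 0 (mod 4), contradicting the necessary residue condition for min-set points. -/
open Complex

lemma mB_eq_zero_iff (x : ℝ) : mB x = 0 ↔ ∃ k : ℤ, 4 * x = 2 * k + 1 := by
  unfold mB
  rw [div_eq_zero_iff]
  simp only [OfNat.ofNat_ne_zero, or_false]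
  constructor
  · intro h
    have hexp : Complex.exp (2 * Real.pi * Complex.I * (2 * x)) = -1 := by
      linear_combination h
    have h2 : Complex.exp (2 * Real.pi * Complex.I * (2 * x) - Real.pi * Complex.I) = 1 := by
      rw [Complex.exp_sub, hexp, Complex.exp_pi_mul_I]
      norm_num
    rw [Complex.exp_eq_one_iff] at h2
    obtain ⟨n, hn⟩ := h2
    refine ⟨n, ?_⟩
    have hI : (Real.pi : ℂ) * Complex.I ≠ 0 :=
      mul_ne_zero (by exact_mod_cast Real.pi_ne_zero) Complex.I_ne_zero
    have hc : (Real.pi : ℂ) * Complex.I * (4 * x - 1) =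
        (Real.pi : ℂ) * Complex.I * (2 * n) := by
      linear_combination hn
    have h3 : ((4 * x - 1 : ℝ) : ℂ) = ((2 * n : ℤ) : ℂ) := by
      push_cast
      exact mul_left_cancel₀ hI hc
    have h4 : (4 * x - 1 : ℝ) = ((2 * n : ℤ) : ℝ) := by exact_mod_cast h3
    push_cast at h4
    linarith
  · rintro ⟨k, hk⟩
    have hc : ((4 * x : ℝ) : ℂ) = ((2 * k + 1 : ℤ) : ℂ) := by exact_mod_cast hk
    push_cast at hc
    have : Complex.exp (2 * Real.pi * Complex.I * (2 * x)) =
        Complex.exp ((k : ℂ) * (2 * Real.pi * Complex.I) + Real.pi * Complex.I) := by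
      congr 1
      linear_combination ((Real.pi : ℂ) * Complex.I) * hc
    rw [this, Complex.exp_add, Complex.exp_int_mul_two_pi_mul_I, Complex.exp_pi_mul_I]
    ring

lemma minset_eq (M : Set ℝ) (h : IsMinSet ({0, 3, 207} : Finset ℤ) M) : M = {0} := by
  obtain ⟨hfin, hne, hinv, hmin⟩ := h
  have h0L : (0 : ℤ) ∈ ({0, 3, 207} : Finset ℤ) := by simp
  have h3L : (3 : ℤ) ∈ ({0, 3, 207} : Finset ℤ) := by simp
  have h207L : (207 : ℤ) ∈ ({0, 3, 207} : Finset ℤ) := by simp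
  -- every element of M is an integer
  have hint : ∀ t ∈ M, ∃ n : ℤ, t = (n : ℝ) := by
    by_contra hcon
    push_neg at hcon
    obtain ⟨t, htM, htn⟩ := hcon
    have step : ∀ x ∈ M, (¬ ∃ n : ℤ, x = (n : ℝ)) →
        x / 4 ∈ M ∧ ¬ ∃ n : ℤ, x / 4 = (n : ℝ) := by
      intro x hx hnx
      have hg : g 0 x = x / 4 := by simp [g]
      have hmb : mB (g 0 x) ≠ 0 := by
        rw [hg, Ne, mB_eq_zero_iff]
        rintro ⟨k, hk⟩
        exact hnx ⟨2 * k + 1, by push_cast; linarith⟩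
      have hmem := hinv x hx 0 h0L hmb
      rw [hg] at hmem
      refine ⟨hmem, ?_⟩
      rintro ⟨n, hn⟩
      exact hnx ⟨4 * n, by push_cast; linarith⟩
    have hall : ∀ m : ℕ, t / 4 ^ m ∈ M ∧ ¬ ∃ n : ℤ, t / 4 ^ m = (n : ℝ) := by
      intro m
      induction m with
      | zero => simpa using ⟨htM, htn⟩
      | succ m ih =>
        have := step _ ih.1 ih.2
        have he : t / 4 ^ m / 4 = t / 4 ^ (m + 1) := by
          rw [pow_succ]; ring
        rw [he] at this
        exact this
    have ht0 : t ≠ 0 := by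
      intro h0
      exact htn 0 (by simp [h0])
    have hinj : Function.Injective (fun m : ℕ => t / 4 ^ m) := by
      intro a b hab
      simp only at hab
      have hpa : (4 : ℝ) ^ a ≠ 0 := by positivity
      have hpb : (4 : ℝ) ^ b ≠ 0 := by positivity
      field_simp at hab
      exact (pow_right_injective₀ (by norm_num : (0:ℝ) < 4) (by norm_num) hab).symm
    exact (Set.infinite_of_injective_forall_mem hinj fun m => (hall m).1) hfin
  -- residue step: from n ∈ M get m ∈ M with n = 4m or n = 4m+3
  have hres : ∀ n : ℤ, (n : ℝ) ∈ M → ∃ m : ℤ, (n = 4 * m ∨ n = 4 * m + 3) ∧ (m : ℝ) ∈ M := by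
    intro n hn
    rcases Int.even_or_odd n with ⟨j, hj⟩ | ⟨j, hj⟩
    · -- n even: use l = 0
      have hg : g 0 (n : ℝ) = (n : ℝ) / 4 := by simp [g]
      have hmb : mB (g 0 (n : ℝ)) ≠ 0 := by
        rw [hg, Ne, mB_eq_zero_iff]
        rintro ⟨k, hk⟩
        have : (n : ℝ) = ((2 * k + 1 : ℤ) : ℝ) := by push_cast; linarith
        have : n = 2 * k + 1 := by exact_mod_cast this
        omega
      have hmem := hinv _ hn 0 h0L hmb
      rw [hg] at hmem
      obtain ⟨m, hm⟩ := hint _ hmem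
      have : (n : ℝ) = ((4 * m : ℤ) : ℝ) := by push_cast; linarith [hm]
      have hnm : n = 4 * m := by exact_mod_cast this
      exact ⟨m, Or.inl hnm, hm ▸ hmem⟩
    · -- n odd: use l = 3
      have hg : g 3 (n : ℝ) = ((n : ℝ) - 3) / 4 := by simp [g]
      have hmb : mB (g 3 (n : ℝ)) ≠ 0 := by
        rw [hg, Ne, mB_eq_zero_iff]
        rintro ⟨k, hk⟩
        have : (n : ℝ) = ((2 * k + 4 : ℤ) : ℝ) := by push_cast; linarith
        have : n = 2 * k + 4 := by exact_mod_cast this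
        omega
      have hmem := hinv _ hn 3 h3L hmb
      rw [hg] at hmem
      obtain ⟨m, hm⟩ := hint _ hmem
      have : (n : ℝ) = ((4 * m + 3 : ℤ) : ℝ) := by push_cast; linarith [hm]
      have hnm : n = 4 * m + 3 := by exact_mod_cast this
      exact ⟨m, Or.inr hnm, hm ▸ hmem⟩
  -- descent: 0 ∈ M or -1 ∈ M
  have hdesc : ∀ N : ℕ, ∀ n : ℤ, n.natAbs ≤ N → (n : ℝ) ∈ M →
      ((0 : ℝ) ∈ M ∨ (-1 : ℝ) ∈ M) := by
    intro N
    induction N with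
    | zero =>
      intro n hN hn
      have : n = 0 := by omega
      subst this
      exact Or.inl (by simpa using hn)
    | succ N ih =>
      intro n hN hn
      by_cases h0 : n = 0
      · subst h0; exact Or.inl (by simpa using hn)
      by_cases h1 : n = -1
      · subst h1; exact Or.inr (by simpa using hn)
      obtain ⟨m, hm, hmM⟩ := hres n hn
      have : m.natAbs ≤ N := by omega
      exact ih m this hmM
  obtain ⟨t, ht⟩ := hne
  obtain ⟨n, hn⟩ := hint t ht
  rw [hn] at ht
  have h01 := hdesc n.natAbs n le_rfl ht
  -- rule out -1 ∈ M
  have hnot1 : (-1 : ℝ) ∉ M := by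
    intro h1
    have e1 : g 207 (-1 : ℝ) = ((-52 : ℤ) : ℝ) := by norm_num [g]
    have e2 : g 0 ((-52 : ℤ) : ℝ) = ((-13 : ℤ) : ℝ) := by norm_num [g]
    have e3 : g 207 ((-13 : ℤ) : ℝ) = ((-55 : ℤ) : ℝ) := by norm_num [g]
    have mbint : ∀ p : ℤ, mB ((p : ℤ) : ℝ) ≠ 0 := by
      intro p
      rw [Ne, mB_eq_zero_iff]
      rintro ⟨k, hk⟩
      have : 4 * p = 2 * k + 1 := by exact_mod_cast hk
      omega
    have h52 : ((-52 : ℤ) : ℝ) ∈ M := by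
      have := hinv _ h1 207 h207L (by rw [e1]; exact mbint (-52))
      rwa [e1] at this
    have h13 : ((-13 : ℤ) : ℝ) ∈ M := by
      have := hinv _ h52 0 h0L (by rw [e2]; exact mbint (-13))
      rwa [e2] at this
    have h55 : ((-55 : ℤ) : ℝ) ∈ M := by
      have := hinv _ h13 207 h207L (by rw [e3]; exact mbint (-55))
      rwa [e3] at this
    obtain ⟨m, hm, _⟩ := hres (-55) h55
    omega
  have h0M : (0 : ℝ) ∈ M := h01.resolve_right hnot1
  -- {0} is invariant
  have hinv0 : IsInvSet ({0, 3, 207} : Finset ℤ) {0} := by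
    intro t ht l hl hmb
    simp only [Set.mem_singleton_iff] at ht
    subst ht
    fin_cases hl
    · simp [g]
    · exfalso
      apply hmb
      rw [mB_eq_zero_iff]
      exact ⟨-2, by norm_num [g]⟩
    · exfalso
      apply hmb
      rw [mB_eq_zero_iff]
      exact ⟨-104, by norm_num [g]⟩
  exact (hmin {0} (by simpa using h0M) ⟨0, rfl⟩ hinv0).symm

/-- for `L = {0,3,207}` there is no nontrivial min-set. Any nontrivial
min-set would contain `-1`; the transitions `-1 → -52 → -13 → -55` (digits 207, 0, 207)
are possible, but `-55 ≢ 3 (mod 4)` and `-55 ≢ 0 (mod 4)`. -/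
theorem stmt10 :
    (∀ M : Set ℝ, IsMinSet ({0, 3, 207} : Finset ℤ) M → M ≠ {0} → (-1 : ℝ) ∈ M) ∧
    g 207 (-1) = -52 ∧ g 0 (-52) = -13 ∧ g 207 (-13) = -55 ∧
    mB (-52) ≠ 0 ∧ mB (-13) ≠ 0 ∧ mB (-55) ≠ 0 ∧
    ¬ ((-55 : ℤ) % 4 = 3) ∧ ¬ ((-55 : ℤ) % 4 = 0) ∧
    (∀ M : Set ℝ, IsMinSet ({0, 3, 207} : Finset ℤ) M → M = {0}) := by
  have mbint : ∀ p : ℤ, mB ((p : ℤ) : ℝ) ≠ 0 := by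
    intro p
    rw [Ne, mB_eq_zero_iff]
    rintro ⟨k, hk⟩
    have : 4 * p = 2 * k + 1 := by exact_mod_cast hk
    omega
  refine ⟨?_, by norm_num [g], by norm_num [g], by norm_num [g],
    by have := mbint (-52); push_cast at this; exact this,
    by have := mbint (-13); push_cast at this; exact this,
    by have := mbint (-55); push_cast at this; exact this,
    by decide, by decide, fun M hM => minset_eq M hM⟩
  intro M hM hne
  exact absurd (minset_eq M hM) hne
end
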